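/- Let X be a smooth projective surface and let R1, ..., Rn be distinct integral curves on X such that every proper subset of {R1, ..., Rn} has negative definite intersection matrix, but the full set does not. Then there exist positive integers c1, ..., cn such that the divisor A = c1 R1 + ... + cn Rn satisfies A² ≥ 0; moreover A can be chosen nef. -/

import Mathlib

section Stmt13Aux
open Finset

private lemma exists_int_scaling {n : ℕ} (x : Fin n → ℚ) :
    ∃ (N : ℤ) (D : Fin n → ℤ), 0 < N ∧ ∀ i, (D i : ℚ) = (N : ℚ) * x i := by
  refine ⟨∏ i, ((x i).den : ℤ), fun i => (x i).num * ∏ j ∈ univ.erase i, ((x j).den : ℤ),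
    Finset.prod_pos fun i _ => Int.natCast_pos.mpr (x i).pos, fun i => ?_⟩
  have hP : (∏ j, ((x j).den : ℚ)) = (∏ j ∈ univ.erase i, ((x j).den : ℚ)) * ((x i).den : ℚ) :=
    (Finset.prod_erase_mul univ _ (mem_univ i)).symm
  have hden : ((x i).den : ℚ) ≠ 0 := Nat.cast_ne_zero.mpr (x i).den_nz
  have hnum : ((x i).num : ℚ) = x i * ((x i).den : ℚ) := by
    field_simp [Rat.num_div_den]
    exact (Rat.mul_den_eq_num (x i)).symm
  push_cast
  rw [hP, hnum]
  ring

private lemma key : ∀ (m : ℕ) (M : Fin m → Fin m → ℚ),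
    (∀ i j, M i j = M j i) →
    (∀ i j, i ≠ j → 0 ≤ M i j) →
    (∀ S : Finset (Fin m), S ≠ univ → ∀ x : Fin m → ℚ,
      (∀ i, i ∉ S → x i = 0) → x ≠ 0 → (∑ i, ∑ j, x i * x j * M i j) < 0) →
    ∀ z : Fin m → ℚ, z ≠ 0 → 0 ≤ (∑ i, ∑ j, z i * z j * M i j) →
    ∃ c : Fin m → ℚ, (∀ i, 0 < c i) ∧ ∀ j, 0 ≤ ∑ i, c i * M i j := by
  intro m
  induction m with
  | zero =>
    intro M _ _ _ z hz _
    exact absurd (funext fun i => i.elim0) hz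
  | succ m ih =>
    intro M hsym hoff hneg z hz0 hzQ
    rcases Nat.eq_zero_or_pos m with hm | hm
    · subst hm
      have hz00 : z 0 ≠ 0 := by
        intro h
        exact hz0 (funext fun i => by rw [Fin.ext (by omega : i.val = (0 : Fin 1).val)]; exact h)
      have h2 : 0 < z 0 * z 0 := mul_self_pos.mpr hz00
      simp only [Fin.sum_univ_succ, Finset.univ_eq_empty, Finset.sum_empty, add_zero] at hzQ
      have h00 : 0 ≤ M 0 0 := by nlinarith
      refine ⟨fun _ => 1, fun _ => one_pos, fun j => ?_⟩
      rw [Fin.ext (by omega : j.val = (0 : Fin 1).val)]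
      simpa [Fin.sum_univ_succ] using h00
    · -- size m+1 ≥ 2
      have hcsne : ∀ i : Fin m, Fin.castSucc i ≠ Fin.last m := fun i => (Fin.castSucc_lt_last i).ne
      set a : Fin m → ℚ := fun i => M i.castSucc (Fin.last m) with ha_def
      have ha : ∀ i, 0 ≤ a i := fun i => hoff _ _ (hcsne i)
      -- expansion of the quadratic form along snoc
      have hQsnoc : ∀ (x : Fin m → ℚ) (t : ℚ),
          (∑ i, ∑ l, (Fin.snoc x t : Fin (m+1) → ℚ) i * (Fin.snoc x t : Fin (m+1) → ℚ) l * M i l)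
            = (∑ i, ∑ l, x i * x l * M i.castSucc l.castSucc)
              + 2 * (t * ∑ i, x i * a i)
              + M (Fin.last m) (Fin.last m) * t ^ 2 := by
        intro x t
        simp only [Fin.sum_univ_castSucc, Fin.snoc_castSucc, Fin.snoc_last]
        rw [Finset.sum_add_distrib]
        have e1 : ∑ i, x i * t * M (Fin.castSucc i) (Fin.last m)
            = t * ∑ i, x i * a i := by
          rw [Finset.mul_sum]
          exact Finset.sum_congr rfl fun i _ => by simp only [ha_def]; ring
        have e2 : ∑ l, t * x l * M (Fin.last m) (Fin.castSucc l)
            = t * ∑ i, x i * a i := by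
          rw [Finset.mul_sum]
          exact Finset.sum_congr rfl fun l _ => by
            simp only [ha_def]; rw [hsym (Fin.last m) (Fin.castSucc l)]; ring
        rw [e1, e2]; ring
      -- {last} is a proper subset
      have hSJne : ({Fin.last m} : Finset (Fin (m+1))) ≠ univ := by
        intro h
        have h0 : Fin.castSucc ⟨0, hm⟩ ∈ ({Fin.last m} : Finset (Fin (m+1))) := h ▸ mem_univ _
        exact hcsne ⟨0, hm⟩ (mem_singleton.mp h0)
      have hMJJ : M (Fin.last m) (Fin.last m) < 0 := by
        have hQ := hneg {Fin.last m} hSJne (Pi.single (Fin.last m) 1)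
          (fun i hi => Pi.single_eq_of_ne (by simpa using hi) 1)
          (by intro h; simpa using congrFun h (Fin.last m))
        have hcalc : (∑ i, ∑ l, (Pi.single (Fin.last m) (1:ℚ) : Fin (m+1) → ℚ) i * (Pi.single (Fin.last m) (1:ℚ) : Fin (m+1) → ℚ) l * M i l)
            = M (Fin.last m) (Fin.last m) := by
          rw [Finset.sum_eq_single (Fin.last m)
            (fun i _ hi => Finset.sum_eq_zero fun l _ => by simp [Pi.single_eq_of_ne hi])
            (fun h => absurd (mem_univ _) h)]
          rw [Finset.sum_eq_single (Fin.last m)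
            (fun l _ hl => by simp [Pi.single_eq_of_ne hl])
            (fun h => absurd (mem_univ _) h)]
          simp
        linarith [hcalc ▸ hQ]
      set d : ℚ := -(M (Fin.last m) (Fin.last m)) with hd_def
      have hd : 0 < d := by rw [hd_def]; linarith
      have hd0 : d ≠ 0 := ne_of_gt hd
      set M' : Fin m → Fin m → ℚ :=
        fun i l => M i.castSucc l.castSucc + a i * a l / d with hM'_def
      have hQM' : ∀ x : Fin m → ℚ,
          (∑ i, ∑ l, x i * x l * M' i l)
            = (∑ i, ∑ l, x i * x l * M i.castSucc l.castSucc)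
              + (∑ i, x i * a i) ^ 2 / d := by
        intro x
        have h1 : ∀ i l, x i * x l * M' i l
            = x i * x l * M i.castSucc l.castSucc + (x i * a i) * (x l * a l) / d := by
          intro i l; simp only [hM'_def]; ring
        have hprod : (∑ i, x i * a i) ^ 2 / d
            = ∑ i, ∑ l, (x i * a i) * (x l * a l) / d := by
          rw [sq, Finset.sum_mul_sum, Finset.sum_div]
          exact Finset.sum_congr rfl fun i _ => Finset.sum_div _ _ _
        simp only [h1, Finset.sum_add_distrib]
        rw [hprod]
      have hkey : ∀ (x : Fin m → ℚ) (t : ℚ),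
          (∑ i, ∑ l, (Fin.snoc x t : Fin (m+1) → ℚ) i * (Fin.snoc x t : Fin (m+1) → ℚ) l * M i l)
            = (∑ i, ∑ l, x i * x l * M' i l)
              - d * (t - (∑ i, x i * a i) / d) ^ 2 := by
        intro x t
        rw [hQsnoc, hQM']
        have hMd : M (Fin.last m) (Fin.last m) = -d := by rw [hd_def]; ring
        rw [hMd]
        field_simp
        ring
      -- proper subsets are negative definite for M'
      have hneg' : ∀ S : Finset (Fin m), S ≠ univ → ∀ x : Fin m → ℚ,
          (∀ i, i ∉ S → x i = 0) → x ≠ 0 → (∑ i, ∑ l, x i * x l * M' i l) < 0 := by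
        intro S hS x hsupp hx0
        have hex : ¬ ∀ i, i ∈ S := fun h => hS (Finset.eq_univ_iff_forall.mpr h)
        obtain ⟨i0, hi0⟩ := not_forall.mp hex
        have hSne : insert (Fin.last m) (S.image Fin.castSucc) ≠ univ := by
          intro h
          have hmem : Fin.castSucc i0 ∈ insert (Fin.last m) (S.image Fin.castSucc) :=
            h ▸ mem_univ _
          rcases mem_insert.mp hmem with h1 | h2
          · exact hcsne i0 h1
          · obtain ⟨i', hi', he⟩ := mem_image.mp h2
            exact hi0 (Fin.castSucc_injective m he ▸ hi')
        have hsupp2 : ∀ i : Fin (m+1), i ∉ insert (Fin.last m) (S.image Fin.castSucc) →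
            (Fin.snoc x ((∑ i, x i * a i) / d) : Fin (m+1) → ℚ) i = 0 := by
          intro i hi
          rcases eq_or_ne i (Fin.last m) with rfl | hne
          · exact absurd (mem_insert_self _ _) hi
          · obtain ⟨i', rfl⟩ := Fin.exists_castSucc_eq.mpr hne
            rw [Fin.snoc_castSucc]
            exact hsupp i' fun hmem => hi (mem_insert_of_mem (mem_image_of_mem _ hmem))
        have hnz2 : (Fin.snoc x ((∑ i, x i * a i) / d) : Fin (m+1) → ℚ) ≠ 0 := by
          intro h
          apply hx0
          funext i
          have := congrFun h (Fin.castSucc i)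
          rwa [Fin.snoc_castSucc] at this
        have hQ := hneg _ hSne _ hsupp2 hnz2
        rw [hkey] at hQ
        simpa using hQ
      -- the truncation of z
      have hz'0 : Fin.init z ≠ 0 := by
        intro h
        have hsuppz : ∀ i, i ∉ ({Fin.last m} : Finset (Fin (m+1))) → z i = 0 := by
          intro i hi
          rcases eq_or_ne i (Fin.last m) with rfl | hne
          · exact absurd (mem_singleton_self _) hi
          · obtain ⟨i', rfl⟩ := Fin.exists_castSucc_eq.mpr hne
            exact congrFun h i'
        exact absurd hzQ (not_le.mpr (hneg _ hSJne z hsuppz hz0))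
      have hzQ2 : 0 ≤ (∑ i, ∑ l, Fin.init z i * Fin.init z l * M i.castSucc l.castSucc)
            + 2 * (z (Fin.last m) * ∑ i, Fin.init z i * a i)
            + M (Fin.last m) (Fin.last m) * z (Fin.last m) ^ 2 := by
        rw [← hQsnoc]
        rw [Fin.snoc_init_self]
        exact hzQ
      have hz'Q : 0 ≤ ∑ i, ∑ l, Fin.init z i * Fin.init z l * M' i l := by
        have h := hzQ
        rw [← Fin.snoc_init_self z] at h
        rw [hkey] at h
        nlinarith [mul_nonneg hd.le
          (sq_nonneg (z (Fin.last m) - (∑ i, Fin.init z i * a i) / d)), h]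
      obtain ⟨c', hc'pos, hc'nef⟩ := ih M'
        (fun i l => by simp only [hM'_def]; rw [hsym i.castSucc l.castSucc]; ring)
        (fun i l hil => by
          simp only [hM'_def]
          exact add_nonneg (hoff _ _ fun h => hil (Fin.castSucc_injective m h))
            (div_nonneg (mul_nonneg (ha i) (ha l)) hd.le))
        hneg' (Fin.init z) hz'0 hz'Q
      set L : ℚ := ∑ i, c' i * a i with hL_def
      have hLnonneg : 0 ≤ L := Finset.sum_nonneg fun i _ => mul_nonneg (hc'pos i).le (ha i)
      have hLpos : 0 < L := by
        rcases hLnonneg.lt_or_eq with h | h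
        · exact h
        · exfalso
          have ha0 : ∀ i, a i = 0 := by
            intro i
            have h0 := (Finset.sum_eq_zero_iff_of_nonneg
              (fun i _ => mul_nonneg (hc'pos i).le (ha i))).mp h.symm i (mem_univ i)
            rcases mul_eq_zero.mp h0 with h1 | h1
            · exact absurd h1 (hc'pos i).ne'
            · exact h1
          have hcompl : ({Fin.last m}ᶜ : Finset (Fin (m+1))) ≠ univ := by
            intro hc
            have hmem : Fin.last m ∈ ({Fin.last m}ᶜ : Finset (Fin (m+1))) := hc ▸ mem_univ _
            simp at hmem
          have hsupp3 : ∀ i : Fin (m+1), i ∉ ({Fin.last m}ᶜ : Finset (Fin (m+1))) →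
              (Fin.snoc (Fin.init z) 0 : Fin (m+1) → ℚ) i = 0 := by
            intro i hi
            rw [Finset.mem_compl, not_not, Finset.mem_singleton] at hi
            subst hi
            exact Fin.snoc_last _ _
          have hnz3 : (Fin.snoc (Fin.init z) 0 : Fin (m+1) → ℚ) ≠ 0 := by
            intro hc
            apply hz'0
            funext i
            have := congrFun hc (Fin.castSucc i)
            rwa [Fin.snoc_castSucc] at this
          have hS1 := hneg _ hcompl _ hsupp3 hnz3
          rw [hQsnoc] at hS1
          have hz0a : ∑ i, Fin.init z i * a i = 0 :=
            Finset.sum_eq_zero fun i _ => by rw [ha0 i, mul_zero]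
          rw [hz0a] at hzQ2 hS1
          nlinarith [sq_nonneg (z (Fin.last m)), hMJJ, hS1, hzQ2]
      refine ⟨(Fin.snoc c' (L / d) : Fin (m+1) → ℚ), ?_, ?_⟩
      · intro i
        rcases eq_or_ne i (Fin.last m) with rfl | hne
        · rw [Fin.snoc_last]; exact div_pos hLpos hd
        · obtain ⟨i', rfl⟩ := Fin.exists_castSucc_eq.mpr hne
          rw [Fin.snoc_castSucc]; exact hc'pos i'
      · intro jj
        rcases eq_or_ne jj (Fin.last m) with rfl | hne
        · have hexp : (∑ i, (Fin.snoc c' (L / d) : Fin (m+1) → ℚ) i * M i (Fin.last m)) = 0 := by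
            rw [Fin.sum_univ_castSucc]
            simp only [Fin.snoc_castSucc, Fin.snoc_last]
            have h1 : ∑ i : Fin m, c' i * M i.castSucc (Fin.last m) = L := by
              simp only [hL_def, ha_def]
            have hMd : M (Fin.last m) (Fin.last m) = -d := by rw [hd_def]; ring
            rw [h1, hMd]
            field_simp
            ring
          exact le_of_eq hexp.symm
        · obtain ⟨i0, rfl⟩ := Fin.exists_castSucc_eq.mpr hne
          have hnef := hc'nef i0
          have hexp : ∑ l, c' l * M' l i0 = (∑ l, c' l * M l.castSucc i0.castSucc)
              + L / d * M (Fin.last m) i0.castSucc := by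
            have h1 : ∀ l, c' l * M' l i0
                = c' l * M l.castSucc i0.castSucc + (c' l * a l) * (a i0 / d) := by
              intro l; simp only [hM'_def]; ring
            simp only [h1, Finset.sum_add_distrib]
            rw [← Finset.sum_mul, ← hL_def]
            rw [hsym (Fin.last m) i0.castSucc]
            simp only [ha_def]
            ring
          rw [Fin.sum_univ_castSucc]
          simp only [Fin.snoc_castSucc, Fin.snoc_last]
          rw [← hexp]
          exact hnef

end Stmt13Aux

open Finset in
/-- (Abstracted to the Néron–Severi lattice.) Let `R1, ..., Rn` be classes of
distinct integral curves (so `Ri·Rj ≥ 0` for `i ≠ j`), such that every proper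
subset has negative definite intersection matrix but the full set does not.
Then some positive integral combination `A = Σ ci Ri` satisfies `A² ≥ 0`, and
`A` can be chosen nef (i.e. `A·Rj ≥ 0` for all `j`, which suffices since `A` is
supported on the `Ri`). -/
theorem stmt_13 (Λ : Type*) [AddCommGroup Λ] [Module ℤ Λ]
    (B : Λ →ₗ[ℤ] Λ →ₗ[ℤ] ℤ)
    (hsymm : ∀ x y, B x y = B y x)
    (n : ℕ) (R : Fin n → Λ)
    (hcurves : ∀ i j, i ≠ j → 0 ≤ B (R i) (R j))
    (hproper : ∀ S : Finset (Fin n), S ≠ Finset.univ →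
      ∀ c : Fin n → ℤ, (∀ i, i ∉ S → c i = 0) → c ≠ 0 →
        B (∑ i, c i • R i) (∑ i, c i • R i) < 0)
    (hfull : ¬ ∀ c : Fin n → ℤ, c ≠ 0 →
        B (∑ i, c i • R i) (∑ i, c i • R i) < 0) :
    ∃ c : Fin n → ℤ, (∀ i, 0 < c i) ∧
      0 ≤ B (∑ i, c i • R i) (∑ i, c i • R i) ∧
      ∀ j, 0 ≤ B (∑ i, c i • R i) (R j) := by
  classical
  have L2 : ∀ (c : Fin n → ℤ) (j : Fin n),
      B (∑ i, c i • R i) (R j) = ∑ i, c i * B (R i) (R j) := by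
    intro c j
    rw [map_sum, LinearMap.sum_apply]
    refine Finset.sum_congr rfl fun i _ => ?_
    have h : (B (c i • R i)) (R j) = (B.flip (R j)) (c i • R i) := rfl
    rw [h, map_zsmul, zsmul_eq_mul, Int.cast_id, LinearMap.flip_apply]
  have L1 : ∀ c : Fin n → ℤ,
      B (∑ i, c i • R i) (∑ i, c i • R i) = ∑ i, ∑ j, c i * c j * B (R i) (R j) := by
    intro c
    calc B (∑ i, c i • R i) (∑ j, c j • R j)
        = ∑ j, B (∑ i, c i • R i) (c j • R j) := map_sum _ _ _
      _ = ∑ j, c j * B (∑ i, c i • R i) (R j) :=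
          Finset.sum_congr rfl fun j _ => by rw [map_zsmul, zsmul_eq_mul, Int.cast_id]
      _ = ∑ j, c j * ∑ i, c i * B (R i) (R j) :=
          Finset.sum_congr rfl fun j _ => by rw [L2]
      _ = ∑ i, ∑ j, c i * c j * B (R i) (R j) := by
          simp only [Finset.mul_sum]
          rw [Finset.sum_comm]
          exact Finset.sum_congr rfl fun i _ => Finset.sum_congr rfl fun j _ => by ring
  -- rational intersection matrix
  have hpropQ : ∀ S : Finset (Fin n), S ≠ univ → ∀ x : Fin n → ℚ,
      (∀ i, i ∉ S → x i = 0) → x ≠ 0 →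
      (∑ i, ∑ j, x i * x j * ((B (R i) (R j) : ℤ) : ℚ)) < 0 := by
    intro S hS x hsupp hx
    obtain ⟨N, D, hN, hD⟩ := exists_int_scaling x
    have hNQ : (0:ℚ) < (N:ℚ) := by exact_mod_cast hN
    have hDsupp : ∀ i, i ∉ S → D i = 0 := by
      intro i hi
      have h1 : (D i : ℚ) = 0 := by rw [hD i, hsupp i hi, mul_zero]
      exact_mod_cast h1
    have hD0 : D ≠ 0 := by
      intro h
      apply hx
      funext i
      have h1 : (N:ℚ) * x i = 0 := by
        rw [← hD i, h]; simp
      rcases mul_eq_zero.mp h1 with h2 | h2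
      · exact absurd h2 hNQ.ne'
      · exact h2
    have hint := hproper S hS D hDsupp hD0
    rw [L1] at hint
    have hcast : ((∑ i, ∑ j, D i * D j * B (R i) (R j) : ℤ) : ℚ)
        = (N:ℚ)^2 * ∑ i, ∑ j, x i * x j * ((B (R i) (R j) : ℤ) : ℚ) := by
      push_cast
      rw [Finset.mul_sum]
      refine Finset.sum_congr rfl fun i _ => ?_
      rw [Finset.mul_sum]
      refine Finset.sum_congr rfl fun j _ => ?_
      rw [hD i, hD j]; ring
    have hlt : ((∑ i, ∑ j, D i * D j * B (R i) (R j) : ℤ) : ℚ) < 0 := by exact_mod_cast hint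
    rw [hcast] at hlt
    nlinarith [hlt, hNQ]
  push_neg at hfull
  obtain ⟨z, hz0, hzQ⟩ := hfull
  rw [L1] at hzQ
  have hzQ' : 0 ≤ ∑ i, ∑ j, (z i : ℚ) * (z j : ℚ) * ((B (R i) (R j) : ℤ) : ℚ) := by
    have h1 : ((∑ i, ∑ j, z i * z j * B (R i) (R j) : ℤ) : ℚ)
        = ∑ i, ∑ j, (z i : ℚ) * (z j : ℚ) * ((B (R i) (R j) : ℤ) : ℚ) := by push_cast; rfl
    rw [← h1]
    exact_mod_cast hzQ
  have hz0' : (fun i => (z i : ℚ)) ≠ 0 := by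
    intro h
    apply hz0
    funext i
    have h2 : ((z i : ℚ)) = 0 := by simpa using congrFun h i
    exact_mod_cast h2
  obtain ⟨c, hcpos, hcnef⟩ := key n (fun i j => ((B (R i) (R j) : ℤ) : ℚ))
    (fun i j => by
      show ((B (R i) (R j) : ℤ) : ℚ) = ((B (R j) (R i) : ℤ) : ℚ)
      exact_mod_cast hsymm (R i) (R j))
    (fun i j hij => by
      show (0:ℚ) ≤ ((B (R i) (R j) : ℤ) : ℚ)
      exact_mod_cast hcurves i j hij)
    hpropQ (fun i => (z i : ℚ)) hz0' hzQ'
  obtain ⟨N, D, hN, hD⟩ := exists_int_scaling c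
  have hNQ : (0:ℚ) < (N:ℚ) := by exact_mod_cast hN
  have hpos : ∀ i, 0 < D i := by
    intro i
    have h1 : (0:ℚ) < (D i : ℚ) := by rw [hD i]; exact mul_pos hNQ (hcpos i)
    exact_mod_cast h1
  have hnef : ∀ j, 0 ≤ B (∑ i, D i • R i) (R j) := by
    intro j
    rw [L2]
    have hq : (0:ℚ) ≤ ∑ i, (D i : ℚ) * ((B (R i) (R j) : ℤ) : ℚ) := by
      have h1 : ∑ i, (D i:ℚ) * ((B (R i) (R j) : ℤ) : ℚ)
          = (N:ℚ) * ∑ i, c i * ((B (R i) (R j) : ℤ) : ℚ) := by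
        rw [Finset.mul_sum]
        exact Finset.sum_congr rfl fun i _ => by rw [hD i]; ring
      rw [h1]
      exact mul_nonneg hNQ.le (hcnef j)
    exact_mod_cast hq
  refine ⟨D, hpos, ?_, hnef⟩
  have hsq : B (∑ i, D i • R i) (∑ j, D j • R j) = ∑ j, D j * B (∑ i, D i • R i) (R j) := by
    calc B (∑ i, D i • R i) (∑ j, D j • R j)
        = ∑ j, B (∑ i, D i • R i) (D j • R j) := map_sum _ _ _
      _ = ∑ j, D j * B (∑ i, D i • R i) (R j) :=
          Finset.sum_congr rfl fun j _ => by rw [map_zsmul, zsmul_eq_mul, Int.cast_id]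
  rw [hsq]
  exact Finset.sum_nonneg fun j _ => mul_nonneg (hpos j).le (hnef j)
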